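/- arXiv:1301.0243 — 11 statements merged into one kernel-verified Lean document; each statement's English description precedes it below -/
import Mathlib

section
/- A point (x, y, z) ∈ ℝ³ satisfies x³ + y³ + z³ − 3xyz = 1 if and only if there exists a real number t > 0 such that x + y + z = t and (x − t/3)² + (y − t/3)² + (z − t/3)² = 2/(3t). In other words, S is the union over all t > 0 of the circles with center (t/3, t/3, t/3) and radius √(2/(3t)) lying in the plane x + y + z = t. -/
theorem stmt_2 (x y z : ℝ) :
    x^3 + y^3 + z^3 - 3*x*y*z = 1 ↔
      ∃ t : ℝ, 0 < t ∧ x + y + z = t ∧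
        (x - t/3)^2 + (y - t/3)^2 + (z - t/3)^2 = 2/(3*t) := by
  have hQ : 0 ≤ x^2 + y^2 + z^2 - x*y - y*z - z*x := by nlinarith [sq_nonneg (x-y), sq_nonneg (y-z), sq_nonneg (z-x)]
  constructor
  · intro h
    have key : (x+y+z) * (x^2 + y^2 + z^2 - x*y - y*z - z*x) = 1 := by nlinarith
    have hs : 0 < x + y + z := by
      rcases lt_trichotomy (x+y+z) 0 with h1 | h1 | h1
      · nlinarith
      · nlinarith
      · exact h1
    refine ⟨x+y+z, hs, rfl, ?_⟩
    field_simp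
    nlinarith
  · rintro ⟨t, ht, hsum, hcirc⟩
    have h2 : (x - t/3)^2 + (y - t/3)^2 + (z - t/3)^2 = 2/(3*t) := hcirc
    have h3 : ((x - t/3)^2 + (y - t/3)^2 + (z - t/3)^2) * (3*t) = 2 := by
      rw [h2]; field_simp
    subst hsum
    linear_combination h3 / 2
end

section
/- For every real t > 0 and every real θ, the point (x(t,θ), y(t,θ), z(t,θ)) with x(t,θ) = t/3 + cos θ/(3√t) + sin θ/√(3t), y(t,θ) = t/3 + cos θ/(3√t) − sin θ/√(3t), z(t,θ) = t/3 − 2cos θ/(3√t) satisfies x³ + y³ + z³ − 3xyz = 1. -/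
theorem stmt_4 (t θ : ℝ) (ht : 0 < t) :
    (t/3 + Real.cos θ/(3*Real.sqrt t) + Real.sin θ/Real.sqrt (3*t))^3
      + (t/3 + Real.cos θ/(3*Real.sqrt t) - Real.sin θ/Real.sqrt (3*t))^3
      + (t/3 - 2*Real.cos θ/(3*Real.sqrt t))^3
      - 3 * (t/3 + Real.cos θ/(3*Real.sqrt t) + Real.sin θ/Real.sqrt (3*t))
          * (t/3 + Real.cos θ/(3*Real.sqrt t) - Real.sin θ/Real.sqrt (3*t))
          * (t/3 - 2*Real.cos θ/(3*Real.sqrt t)) = 1 := by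
  have h3t : Real.sqrt (3*t) = Real.sqrt 3 * Real.sqrt t := Real.sqrt_mul (by norm_num) t
  rw [h3t]
  set s := Real.sqrt t with hs
  set r := Real.sqrt 3 with hr
  have hs2 : s^2 = t := Real.sq_sqrt ht.le
  have hr2 : r^2 = 3 := Real.sq_sqrt (by norm_num)
  have hs0 : s ≠ 0 := by positivity
  have hr0 : r ≠ 0 := by positivity
  have hpy := Real.sin_sq_add_cos_sq θ
  have key : t * (9*(Real.cos θ/(3*s))^2 + 3*(Real.sin θ/(r*s))^2) = 1 := by
    rw [← hs2]
    field_simp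
    linear_combination 27 * hpy + (9*Real.cos θ^2 - 9) * hr2
  linear_combination key
end

section
/- Every point (x, y, z) ∈ ℝ³ satisfying x³ + y³ + z³ − 3xyz = 1 is of the form x = t/3 + cos θ/(3√t) + sin θ/√(3t), y = t/3 + cos θ/(3√t) − sin θ/√(3t), z = t/3 − 2cos θ/(3√t) for some real t > 0 and some θ with 0 ≤ θ < 2π; that is, the parametrization r(t,θ) covers all of S. -/
/-- Given `c^2 + s^2 = 1`, there is an angle `θ ∈ [0, 2π)` with
`cos θ = c` and `sin θ = s`. -/
lemma exists_angle (c s : ℝ) (hcs : c^2 + s^2 = 1) :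
    ∃ θ : ℝ, 0 ≤ θ ∧ θ < 2*Real.pi ∧ Real.cos θ = c ∧ Real.sin θ = s := by
  set w : ℂ := ⟨c, s⟩ with hw
  have habs : ‖w‖ = 1 := by
    have h1 : ‖w‖ ^ 2 = 1 := by
      rw [Complex.sq_norm, Complex.normSq_mk]
      nlinarith
    nlinarith [norm_nonneg w]
  have hw0 : w ≠ 0 := by
    intro h0
    rw [h0] at habs
    simp at habs
  have hcos : Real.cos w.arg = c := by
    rw [Complex.cos_arg hw0, habs]; simp [hw]
  have hsin : Real.sin w.arg = s := by
    rw [Complex.sin_arg, habs]; simp [hw]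
  have hlb := Complex.neg_pi_lt_arg w
  have hub := Complex.arg_le_pi w
  have hpi := Real.pi_pos
  by_cases hθ : 0 ≤ w.arg
  · exact ⟨w.arg, hθ, by linarith, hcos, hsin⟩
  · refine ⟨w.arg + 2*Real.pi, by linarith, by linarith, ?_, ?_⟩
    · rw [Real.cos_add_two_pi, hcos]
    · rw [Real.sin_add_two_pi, hsin]

theorem stmt_5 (x y z : ℝ) (h : x^3 + y^3 + z^3 - 3*x*y*z = 1) :
    ∃ t θ : ℝ, 0 < t ∧ 0 ≤ θ ∧ θ < 2*Real.pi ∧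
      x = t/3 + Real.cos θ/(3*Real.sqrt t) + Real.sin θ/Real.sqrt (3*t) ∧
      y = t/3 + Real.cos θ/(3*Real.sqrt t) - Real.sin θ/Real.sqrt (3*t) ∧
      z = t/3 - 2*Real.cos θ/(3*Real.sqrt t) := by
  have ht : 0 < x + y + z := by
    by_contra hle
    push_neg at hle
    nlinarith [sq_nonneg (x - y), sq_nonneg (y - z), sq_nonneg (x - z)]
  have h3t : 0 < 3 * (x + y + z) := by linarith
  have hst : 0 < Real.sqrt (x + y + z) := Real.sqrt_pos.mpr ht
  have hs3t : 0 < Real.sqrt (3*(x + y + z)) := Real.sqrt_pos.mpr h3t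
  have hsq : Real.sqrt (x + y + z) ^ 2 = x + y + z := Real.sq_sqrt ht.le
  have h3sq : Real.sqrt (3*(x + y + z)) ^ 2 = 3*(x + y + z) := Real.sq_sqrt h3t.le
  have hcs : (-3 * Real.sqrt (x + y + z) * (z - (x + y + z)/3) / 2)^2
      + (Real.sqrt (3*(x + y + z)) * (x - y) / 2)^2 = 1 := by
    linear_combination (9*(z - (x + y + z)/3)^2/4) * hsq + ((x - y)^2/4) * h3sq + h
  obtain ⟨θ, hθ0, hθ2, hcosθ, hsinθ⟩ := exists_angle _ _ hcs
  refine ⟨x + y + z, θ, ht, hθ0, hθ2, ?_, ?_, ?_⟩ <;>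
  · simp only [hcosθ, hsinθ]
    field_simp
    ring
end

section
/- For a real number r, the set S_r = {(x,y,z) ∈ ℝ³ : x³ + y³ + z³ − r·xyz = 1} is invariant under every rotation of ℝ³ fixing the line x = y = z pointwise if and only if r = 3. In particular, for r ≠ 3 the surface S_r is not a surface of revolution with axis x = y = z. -/
open Matrix

lemma stmt_8_aux (R : Matrix (Fin 3) (Fin 3) ℝ) (hO : Rᵀ * R = 1)
    (hfix : R.mulVec ![1, 1, 1] = ![1, 1, 1]) (v : Fin 3 → ℝ) :
    (R.mulVec v 0)^3 + (R.mulVec v 1)^3 + (R.mulVec v 2)^3 -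
        3 * (R.mulVec v 0 * R.mulVec v 1 * R.mulVec v 2)
      = (v 0)^3 + (v 1)^3 + (v 2)^3 - 3 * (v 0 * v 1 * v 2) := by
  have htfix : Rᵀ.mulVec ![1, 1, 1] = ![1, 1, 1] := by
    have h := congrArg (fun w => Rᵀ.mulVec w) hfix
    simpa [Matrix.mulVec_mulVec, hO, Matrix.one_mulVec] using h.symm
  have hc0 : R 0 0 + R 1 0 + R 2 0 = 1 := by
    simpa [Matrix.mulVec, dotProduct, Fin.sum_univ_three,
      Matrix.transpose_apply] using congrFun htfix 0
  have hc1 : R 0 1 + R 1 1 + R 2 1 = 1 := by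
    simpa [Matrix.mulVec, dotProduct, Fin.sum_univ_three,
      Matrix.transpose_apply] using congrFun htfix 1
  have hc2 : R 0 2 + R 1 2 + R 2 2 = 1 := by
    simpa [Matrix.mulVec, dotProduct, Fin.sum_univ_three,
      Matrix.transpose_apply] using congrFun htfix 2
  have horth : ∀ j k : Fin 3,
      R 0 j * R 0 k + R 1 j * R 1 k + R 2 j * R 2 k = (1 : Matrix (Fin 3) (Fin 3) ℝ) j k := by
    intro j k
    simpa [Matrix.mul_apply, Fin.sum_univ_three, Matrix.transpose_apply]
      using congrFun (congrFun hO j) k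
  have h00 : R 0 0 * R 0 0 + R 1 0 * R 1 0 + R 2 0 * R 2 0 = 1 := by
    simpa [Matrix.one_apply] using horth 0 0
  have h11 : R 0 1 * R 0 1 + R 1 1 * R 1 1 + R 2 1 * R 2 1 = 1 := by
    simpa [Matrix.one_apply] using horth 1 1
  have h22 : R 0 2 * R 0 2 + R 1 2 * R 1 2 + R 2 2 * R 2 2 = 1 := by
    simpa [Matrix.one_apply] using horth 2 2
  have h01 : R 0 0 * R 0 1 + R 1 0 * R 1 1 + R 2 0 * R 2 1 = 0 := by
    simpa [Matrix.one_apply] using horth 0 1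
  have h02 : R 0 0 * R 0 2 + R 1 0 * R 1 2 + R 2 0 * R 2 2 = 0 := by
    simpa [Matrix.one_apply] using horth 0 2
  have h12 : R 0 1 * R 0 2 + R 1 1 * R 1 2 + R 2 1 * R 2 2 = 0 := by
    simpa [Matrix.one_apply] using horth 1 2
  set x := v 0; set y := v 1; set z := v 2
  have hw : ∀ i : Fin 3, R.mulVec v i = R i 0 * x + R i 1 * y + R i 2 * z := by
    intro i
    simp [Matrix.mulVec, dotProduct, Fin.sum_univ_three]
    rfl
  rw [hw 0, hw 1, hw 2]
  have hs : (R 0 0 * x + R 0 1 * y + R 0 2 * z) + (R 1 0 * x + R 1 1 * y + R 1 2 * z)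
      + (R 2 0 * x + R 2 1 * y + R 2 2 * z) = x + y + z := by
    linear_combination x * hc0 + y * hc1 + z * hc2
  have hq : (R 0 0 * x + R 0 1 * y + R 0 2 * z)^2 + (R 1 0 * x + R 1 1 * y + R 1 2 * z)^2
      + (R 2 0 * x + R 2 1 * y + R 2 2 * z)^2 = x^2 + y^2 + z^2 := by
    linear_combination x^2 * h00 + y^2 * h11 + z^2 * h22 + 2*x*y * h01 + 2*x*z * h02
      + 2*y*z * h12
  have key : ∀ a b c : ℝ, a^3 + b^3 + c^3 - 3 * (a*b*c)
      = ((a+b+c) * (3*(a^2+b^2+c^2) - (a+b+c)^2)) / 2 := by intros; ring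
  rw [key, key, hs, hq]

theorem stmt_8 (r : ℝ) :
    (∀ R : Matrix (Fin 3) (Fin 3) ℝ, Rᵀ * R = 1 → R.det = 1 →
        R.mulVec ![1, 1, 1] = ![1, 1, 1] →
        (fun v => R.mulVec v) ''
            {v : Fin 3 → ℝ | (v 0)^3 + (v 1)^3 + (v 2)^3 - r * (v 0 * v 1 * v 2) = 1}
          = {v : Fin 3 → ℝ | (v 0)^3 + (v 1)^3 + (v 2)^3 - r * (v 0 * v 1 * v 2) = 1})
      ↔ r = 3 := by
  constructor
  · intro h
    set R0 : Matrix (Fin 3) (Fin 3) ℝ :=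
      !![(-1)/3, 2/3, 2/3; 2/3, (-1)/3, 2/3; 2/3, 2/3, (-1)/3] with hR0
    have hO : R0ᵀ * R0 = 1 := by
      ext i j
      fin_cases i <;> fin_cases j <;>
        norm_num [hR0, Matrix.mul_apply, Fin.sum_univ_three, Matrix.one_apply,
          Matrix.transpose_apply, Matrix.cons_val_zero, Matrix.cons_val_one,
          Matrix.head_cons, Matrix.cons_val_two, Matrix.tail_cons,
          Matrix.vecHead, Matrix.vecTail, Fin.ext_iff]
    have hdet : R0.det = 1 := by
      rw [hR0, Matrix.det_fin_three]
      norm_num [Matrix.cons_val_zero, Matrix.cons_val_one, Matrix.head_cons,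
        Matrix.cons_val_two, Matrix.tail_cons, Matrix.vecHead, Matrix.vecTail]
    have hfix : R0.mulVec ![1, 1, 1] = ![1, 1, 1] := by
      funext i
      fin_cases i <;> norm_num [hR0, Matrix.mulVec, dotProduct, Fin.sum_univ_three,
        Matrix.cons_val_zero, Matrix.cons_val_one, Matrix.head_cons,
        Matrix.cons_val_two, Matrix.tail_cons, Matrix.vecHead, Matrix.vecTail]
    have him := h R0 hO hdet hfix
    have hp : (![1, 0, 0] : Fin 3 → ℝ) ∈
        {v : Fin 3 → ℝ | (v 0)^3 + (v 1)^3 + (v 2)^3 - r * (v 0 * v 1 * v 2) = 1} := by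
      simp
    have hmem : R0.mulVec ![1, 0, 0] ∈
        {v : Fin 3 → ℝ | (v 0)^3 + (v 1)^3 + (v 2)^3 - r * (v 0 * v 1 * v 2) = 1} := by
      rw [← him]; exact Set.mem_image_of_mem _ hp
    have hval0 : R0.mulVec ![1, 0, 0] 0 = (-1)/3 := by
      norm_num [hR0, Matrix.mulVec, dotProduct, Fin.sum_univ_three,
        Matrix.cons_val_zero, Matrix.cons_val_one, Matrix.head_cons,
        Matrix.cons_val_two, Matrix.tail_cons, Matrix.vecHead, Matrix.vecTail]
    have hval1 : R0.mulVec ![1, 0, 0] 1 = 2/3 := by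
      norm_num [hR0, Matrix.mulVec, dotProduct, Fin.sum_univ_three,
        Matrix.cons_val_zero, Matrix.cons_val_one, Matrix.head_cons,
        Matrix.cons_val_two, Matrix.tail_cons, Matrix.vecHead, Matrix.vecTail]
    have hval2 : R0.mulVec ![1, 0, 0] 2 = 2/3 := by
      norm_num [hR0, Matrix.mulVec, dotProduct, Fin.sum_univ_three,
        Matrix.cons_val_zero, Matrix.cons_val_one, Matrix.head_cons,
        Matrix.cons_val_two, Matrix.tail_cons, Matrix.vecHead, Matrix.vecTail]
    simp only [Set.mem_setOf_eq, hval0, hval1, hval2] at hmem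
    norm_num at hmem
    linarith
  · rintro rfl
    intro R hO _ hfix
    have hO' : R * Rᵀ = 1 := mul_eq_one_comm.mp hO
    ext w
    constructor
    · rintro ⟨v, hv, rfl⟩
      simp only [Set.mem_setOf_eq] at hv ⊢
      rw [stmt_8_aux R hO hfix v]
      exact hv
    · intro hw
      refine ⟨Rᵀ.mulVec w, ?_, ?_⟩
      · have := stmt_8_aux R hO hfix (Rᵀ.mulVec w)
        simp only [Set.mem_setOf_eq] at hw ⊢
        rw [Matrix.mulVec_mulVec, hO', Matrix.one_mulVec] at this
        rw [← this]; exact hw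
      · simp [Matrix.mulVec_mulVec, hO', Matrix.one_mulVec]
end

section
/- Let F(w,x,y,z) = x³ + y³ + z³ − 3xyz − w³ over ℂ, and let ε be a primitive complex cube root of unity. A nonzero point (w,x,y,z) ∈ ℂ⁴ satisfies F(w,x,y,z) = 0 together with the vanishing of all four partial derivatives F_w = F_x = F_y = F_z = 0 if and only if (w,x,y,z) is a nonzero scalar multiple of one of the three points (0,1,1,1), (0,1,ε,ε²), (0,1,ε²,ε). -/
private lemma derivW (a w : ℂ) : deriv (fun w' : ℂ => a - w'^3) w = -(3*w^2) := by
  have h : HasDerivAt (fun w' : ℂ => a - w'^3) (-(3*w^2)) w := by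
    simpa using (hasDerivAt_pow 3 w).const_sub a
  exact h.deriv

private lemma derivX (a b c u v x : ℂ) :
    deriv (fun t : ℂ => t^3 + a + b - 3*t*u*v - c) x = 3*x^2 - 3*u*v := by
  have h1 : HasDerivAt (fun t : ℂ => t^3) (3*x^2) x := by simpa using hasDerivAt_pow 3 x
  have h2 : HasDerivAt (fun t : ℂ => 3*t*u*v) (3*u*v) x := by
    simpa [mul_assoc, mul_comm] using
      (((hasDerivAt_id x).const_mul (3:ℂ)).mul_const u).mul_const v
  have h : HasDerivAt (fun t : ℂ => t^3 + a + b - 3*t*u*v - c) (3*x^2 - 3*u*v) x :=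
    (((h1.add_const a).add_const b).sub h2).sub_const c
  exact h.deriv

private lemma derivY (a b c u v y : ℂ) :
    deriv (fun t : ℂ => a + t^3 + b - 3*u*t*v - c) y = 3*y^2 - 3*u*v := by
  have h1 : HasDerivAt (fun t : ℂ => t^3) (3*y^2) y := by simpa using hasDerivAt_pow 3 y
  have h2 : HasDerivAt (fun t : ℂ => 3*u*t*v) (3*u*v) y := by
    simpa [mul_assoc, mul_comm] using
      ((hasDerivAt_id y).const_mul (3*u)).mul_const v
  have h : HasDerivAt (fun t : ℂ => a + t^3 + b - 3*u*t*v - c) (3*y^2 - 3*u*v) y :=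
    (((h1.const_add a).add_const b).sub h2).sub_const c
  exact h.deriv

private lemma derivZ (a b c u v z : ℂ) :
    deriv (fun t : ℂ => a + b + t^3 - 3*u*v*t - c) z = 3*z^2 - 3*u*v := by
  have h1 : HasDerivAt (fun t : ℂ => t^3) (3*z^2) z := by simpa using hasDerivAt_pow 3 z
  have h2 : HasDerivAt (fun t : ℂ => 3*u*v*t) (3*u*v) z := by
    simpa [mul_assoc, mul_comm] using (hasDerivAt_id z).const_mul (3*u*v)
  have h : HasDerivAt (fun t : ℂ => a + b + t^3 - 3*u*v*t - c) (3*z^2 - 3*u*v) z :=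
    ((h1.const_add (a+b)).sub h2).sub_const c
  exact h.deriv

theorem stmt_9 (ε : ℂ) (hε : IsPrimitiveRoot ε 3)
    (w x y z : ℂ) (hp : (w, x, y, z) ≠ (0, 0, 0, 0)) :
    (x^3 + y^3 + z^3 - 3*x*y*z - w^3 = 0 ∧
      deriv (fun w' => x^3 + y^3 + z^3 - 3*x*y*z - w'^3) w = 0 ∧
      deriv (fun x' => x'^3 + y^3 + z^3 - 3*x'*y*z - w^3) x = 0 ∧
      deriv (fun y' => x^3 + y'^3 + z^3 - 3*x*y'*z - w^3) y = 0 ∧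
      deriv (fun z' => x^3 + y^3 + z'^3 - 3*x*y*z' - w^3) z = 0)
    ↔ ∃ c : ℂ, c ≠ 0 ∧
        ((w, x, y, z) = (0, c, c, c) ∨
         (w, x, y, z) = (0, c, c*ε, c*ε^2) ∨
         (w, x, y, z) = (0, c, c*ε^2, c*ε)) := by
  have hε3 : ε^3 = 1 := hε.pow_eq_one
  have hεne : ε ≠ 1 := hε.ne_one (by norm_num)
  have hsum : ε^2 + ε + 1 = 0 := by
    have h' : (ε - 1) * (ε^2 + ε + 1) = 0 := by linear_combination hε3
    rcases mul_eq_zero.mp h' with h | h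
    · exact absurd (sub_eq_zero.mp h) hεne
    · exact h
  rw [derivW, derivX, derivY, derivZ]
  constructor
  · rintro ⟨hF, hW, hX, hY, hZ⟩
    have hw : w = 0 := by
      have h2 : w^2 = 0 := by linear_combination (-(1:ℂ)/3) * hW
      exact (pow_eq_zero_iff two_ne_zero).mp h2
    have hx2 : x^2 = y*z := by linear_combination hX/3
    have hy2 : y^2 = x*z := by linear_combination hY/3
    have hz2 : z^2 = x*y := by linear_combination hZ/3
    have hx : x ≠ 0 := by
      intro hx0
      apply hp
      have hy0 : y = 0 := by
        have : y^2 = 0 := by rw [hy2, hx0, zero_mul]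
        exact (pow_eq_zero_iff two_ne_zero).mp this
      have hz0 : z = 0 := by
        have : z^2 = 0 := by rw [hz2, hx0, zero_mul]
        exact (pow_eq_zero_iff two_ne_zero).mp this
      simp [hw, hx0, hy0, hz0]
    have hy3 : y^3 = x^3 := by linear_combination (y/3)*hY - (x/3)*hX
    have hfac : (y - x) * (y - ε*x) * (y - ε^2*x) = 0 := by
      linear_combination hy3 + (x^2*y - x^3)*hε3 + (x^2*y - x*y^2)*hsum
    rcases mul_eq_zero.mp hfac with h12 | h3
    · rcases mul_eq_zero.mp h12 with h1 | h2
      · -- y = x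
        have hy : y = x := sub_eq_zero.mp h1
        have hz : z = x := by
          have := hx2
          rw [hy] at this
          have hxz : x * z = x * x := by linear_combination -this
          exact mul_left_cancel₀ hx hxz
        exact ⟨x, hx, Or.inl (by rw [hw, hy, hz])⟩
      · -- y = ε*x
        have hy : y = ε*x := sub_eq_zero.mp h2
        have hεx : ε*x ≠ 0 := mul_ne_zero (hε.ne_zero (by norm_num)) hx
        have hz : z = x*ε^2 := by
          have h := hx2
          rw [hy] at h
          have : (ε*x) * z = (ε*x) * (x*ε^2) := by linear_combination -h - x^2*hε3
          exact mul_left_cancel₀ hεx this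
        exact ⟨x, hx, Or.inr (Or.inl (by rw [hw, hy, hz, mul_comm ε x]))⟩
    · -- y = ε^2*x
      have hy : y = ε^2*x := sub_eq_zero.mp h3
      have hεx : ε^2*x ≠ 0 := mul_ne_zero (pow_ne_zero 2 (hε.ne_zero (by norm_num))) hx
      have hz : z = x*ε := by
        have h := hx2
        rw [hy] at h
        have : (ε^2*x) * z = (ε^2*x) * (x*ε) := by linear_combination -h - x^2*hε3
        exact mul_left_cancel₀ hεx this
      exact ⟨x, hx, Or.inr (Or.inr (by rw [hw, hy, hz, mul_comm (ε^2) x]))⟩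
  · rintro ⟨c, hc, h | h | h⟩ <;>
      simp only [Prod.mk.injEq] at h <;>
      obtain ⟨hw, hx, hy, hz⟩ := h <;> subst hw hx hy hz
    · refine ⟨by ring, by ring, by ring, by ring, by ring⟩
    · exact ⟨by linear_combination x^3*(ε^3-1)*hε3, by ring,
        by linear_combination (-3*x^2)*hε3, by ring, by linear_combination 3*x^2*ε*hε3⟩
    · exact ⟨by linear_combination x^3*(ε^3-1)*hε3, by ring,
        by linear_combination (-3*x^2)*hε3, by linear_combination 3*x^2*ε*hε3, by ring⟩
end

section
/- No affine line in ℝ³ is contained in the surface S = {(x,y,z) ∈ ℝ³ : x³ + y³ + z³ − 3xyz = 1}; that is, there do not exist a point p ∈ ℝ³ and a nonzero direction v ∈ ℝ³ such that p + s·v ∈ S for all s ∈ ℝ. -/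
private lemma sq3_zero {a b c : ℝ} (h : a^2 + b^2 + c^2 = 0) :
    a = 0 ∧ b = 0 ∧ c = 0 := by
  have ha := sq_nonneg a
  have hb := sq_nonneg b
  have hc := sq_nonneg c
  refine ⟨?_, ?_, ?_⟩ <;>
    [skip; skip; skip] <;>
    first
    | exact pow_eq_zero_iff two_ne_zero |>.mp (by linarith)

theorem stmt_12 :
    ¬ ∃ (p v : ℝ × ℝ × ℝ), v ≠ 0 ∧ ∀ s : ℝ,
      (p + s • v).1^3 + (p + s • v).2.1^3 + (p + s • v).2.2^3
        - 3 * (p + s • v).1 * (p + s • v).2.1 * (p + s • v).2.2 = 1 := by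
  rintro ⟨⟨p1, p2, p3⟩, ⟨v1, v2, v3⟩, hv, h⟩
  simp only [Prod.mk_add_mk, Prod.smul_mk, smul_eq_mul, ne_eq, Prod.mk_eq_zero,
    not_and] at h hv
  have e0 := h 0
  have e1 := h 1
  have em1 := h (-1)
  have e2 := h 2
  ring_nf at e0 e1 em1 e2
  have hD : p1^3 + p2^3 + p3^3 - 3*p1*p2*p3 = 1 := by linear_combination e0
  have hA : v1^3 + v2^3 + v3^3 - 3*v1*v2*v3 = 0 := by
    linear_combination (e2 + 3*e0 - 3*e1 - em1) / 6
  have hB : p1*v1^2 + p2*v2^2 + p3*v3^2 - (p1*v2*v3 + v1*p2*v3 + v1*v2*p3) = 0 := by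
    linear_combination (e1 + em1 - 2*e0) / 6
  have hC : p1^2*v1 + p2^2*v2 + p3^2*v3 - (p1*p2*v3 + p1*v2*p3 + v1*p2*p3) = 0 := by
    linear_combination (e1 - em1) / 6 - hA / 3
  rcases mul_eq_zero.mp (show (v1+v2+v3) * (v1^2+v2^2+v3^2-v1*v2-v2*v3-v3*v1) = 0 by
      linear_combination hA) with hV | hQ
  · rcases mul_eq_zero.mp (show (p1+p2+p3) * (v1^2+v2^2+v3^2-v1*v2-v2*v3-v3*v1) = 0 by
        linear_combination 3*hB - (2*(p1*v1+p2*v2+p3*v3)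
          - (p1*v2+p2*v1+p2*v3+p3*v2+p1*v3+p3*v1)) * hV) with hP | hQ
    · have h0 : p1^3 + p2^3 + p3^3 - 3*p1*p2*p3 = 0 := by
        linear_combination (p1^2+p2^2+p3^2-p1*p2-p2*p3-p3*p1) * hP
      linarith
    · have hs : (v1-v2)^2 + (v2-v3)^2 + (v3-v1)^2 = 0 := by linear_combination 2*hQ
      obtain ⟨h1, h2, h3⟩ := sq3_zero hs
      have hv1 : v1 = 0 := by linarith [sub_eq_zero.mp h1, sub_eq_zero.mp h2]
      exact hv hv1 (by linarith [sub_eq_zero.mp h1]) (by linarith [sub_eq_zero.mp h1, sub_eq_zero.mp h2])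
  · have hs : (v1-v2)^2 + (v2-v3)^2 + (v3-v1)^2 = 0 := by linear_combination 2*hQ
    obtain ⟨h1, h2, h3⟩ := sq3_zero hs
    have h12 : v1 = v2 := sub_eq_zero.mp h1
    have h23 : v2 = v3 := sub_eq_zero.mp h2
    have hC' : (3*v1) * (p1^2+p2^2+p3^2-p1*p2-p2*p3-p3*p1) = 0 := by
      rw [h12, h23] at hC ⊢
      linear_combination 3*hC
    rcases mul_eq_zero.mp hC' with h0 | hQ0
    · have hv1 : v1 = 0 := by linarith
      exact hv hv1 (by linarith) (by linarith)
    · have h0 : p1^3 + p2^3 + p3^3 - 3*p1*p2*p3 = 0 := by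
        linear_combination (p1 + p2 + p3) * hQ0
      linarith
end

section
/- No affine line in ℂ³ is contained in the complex surface {(x,y,z) ∈ ℂ³ : x³ + y³ + z³ − 3xyz = 1}; that is, there do not exist p ∈ ℂ³ and a nonzero v ∈ ℂ³ with p + λ·v in the surface for all λ ∈ ℂ. -/
private lemma aux2 (α0 α1 α2 β1 β2 : ℂ) (h0 : α0 ≠ 0) (h1 : α1 ≠ 0) (h2 : α2 ≠ 0)
    (hB : α0*β1*β2 = 0) (hC : α0*α1*β2 + α0*α2*β1 = 0) : β1 = 0 ∧ β2 = 0 := by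
  have hbb : β1*β2 = 0 := by
    rcases mul_eq_zero.1 hB with h | h
    · rcases mul_eq_zero.1 h with h' | h'
      · exact absurd h' h0
      · rw [h']; ring
    · rw [h]; ring
  rcases mul_eq_zero.1 hbb with h | h
  · refine ⟨h, ?_⟩
    have : α0*α1*β2 = 0 := by linear_combination hC - α0*α2*h
    rcases mul_eq_zero.1 this with h' | h'
    · rcases mul_eq_zero.1 h' with h'' | h''
      · exact absurd h'' h0
      · exact absurd h'' h1
    · exact h'
  · refine ⟨?_, h⟩
    have : α0*α2*β1 = 0 := by linear_combination hC - α0*α1*h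
    rcases mul_eq_zero.1 this with h' | h'
    · rcases mul_eq_zero.1 h' with h'' | h''
      · exact absurd h'' h0
      · exact absurd h'' h2
    · exact h'

private lemma aux (α0 α1 α2 β0 β1 β2 : ℂ) (hD : α0*α1*α2 = 1)
    (hA : β0*β1*β2 = 0)
    (hB : α0*β1*β2 + α1*β0*β2 + α2*β0*β1 = 0)
    (hC : α0*α1*β2 + α0*α2*β1 + α1*α2*β0 = 0) :
    β0 = 0 ∧ β1 = 0 ∧ β2 = 0 := by
  have h0 : α0 ≠ 0 := by intro h; rw [h] at hD; simp at hD
  have h1 : α1 ≠ 0 := by intro h; rw [h] at hD; simp at hD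
  have h2 : α2 ≠ 0 := by intro h; rw [h] at hD; simp at hD
  rcases mul_eq_zero.1 hA with h | hb2
  · rcases mul_eq_zero.1 h with hb0 | hb1
    · obtain ⟨e1, e2⟩ := aux2 α0 α1 α2 β1 β2 h0 h1 h2
        (by linear_combination hB - (α1*β2 + α2*β1)*hb0)
        (by linear_combination hC - α1*α2*hb0)
      exact ⟨hb0, e1, e2⟩
    · obtain ⟨e2, e0⟩ := aux2 α1 α2 α0 β2 β0 h1 h2 h0
        (by linear_combination hB - (α0*β2 + α2*β0)*hb1)
        (by linear_combination hC - α0*α2*hb1)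
      exact ⟨e0, hb1, e2⟩
  · obtain ⟨e0, e1⟩ := aux2 α2 α0 α1 β0 β1 h2 h0 h1
      (by linear_combination hB - (α0*β1 + α1*β0)*hb2)
      (by linear_combination hC - α0*α1*hb2)
    exact ⟨e0, e1, hb2⟩

theorem stmt_14 :
    ¬ ∃ (p v : ℂ × ℂ × ℂ), v ≠ 0 ∧ ∀ lam : ℂ,
      (p + lam • v).1^3 + (p + lam • v).2.1^3 + (p + lam • v).2.2^3
        - 3 * (p + lam • v).1 * (p + lam • v).2.1 * (p + lam • v).2.2 = 1 := by
  rintro ⟨⟨p1, p2, p3⟩, ⟨a, b, c⟩, hv, h⟩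
  simp only [Prod.mk_add_mk, Prod.smul_mk, smul_eq_mul] at h
  set ω : ℂ := (-1 + (Real.sqrt 3 : ℂ) * Complex.I) / 2 with hωdef
  have h3 : ((Real.sqrt 3 : ℝ) : ℂ)^2 = 3 := by
    norm_cast
    rw [Real.sq_sqrt] ; norm_num
  have hω : ω^2 + ω + 1 = 0 := by
    rw [hωdef]
    linear_combination (((Real.sqrt 3 : ℝ) : ℂ)^2/4) * Complex.I_sq - (1/4 : ℂ) * h3
  have hA : (a+b+c)*(a+ω*b+ω^2*c)*(a+ω^2*b+ω*c) = 0 := by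
    linear_combination (1/6:ℂ)*h 2 - (1/2:ℂ)*h 1 + (1/2:ℂ)*h 0 - (1/6:ℂ)*h (-1) +
      ((-1:ℂ)*c^3 + (1:ℂ)*c^3*ω + (1:ℂ)*b*c^2*ω^2 + (1:ℂ)*b^2*c*ω^2 + (-1:ℂ)*b^3 + (1:ℂ)*b^3*ω + (1:ℂ)*a*c^2*ω + (3:ℂ)*a*b*c + (-1:ℂ)*a*b*c*ω + (1:ℂ)*a*b*c*ω^2 + (1:ℂ)*a*b^2*ω + (1:ℂ)*a^2*c + (1:ℂ)*a^2*b)*hω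
  have hB : (p1+p2+p3)*(a+ω*b+ω^2*c)*(a+ω^2*b+ω*c)
      + (p1+ω*p2+ω^2*p3)*(a+b+c)*(a+ω^2*b+ω*c)
      + (p1+ω^2*p2+ω*p3)*(a+b+c)*(a+ω*b+ω^2*c) = 0 := by
    linear_combination (1/2:ℂ)*h 1 + (1/2:ℂ)*h (-1) - h 0 +
      ((-3:ℂ)*c^2*p3 + (3:ℂ)*c^2*p3*ω + (1:ℂ)*c^2*p2*ω^2 + (1:ℂ)*c^2*p1*ω + (2:ℂ)*b*c*p3*ω^2 + (2:ℂ)*b*c*p2*ω^2 + (3:ℂ)*b*c*p1 + (-1:ℂ)*b*c*p1*ω + (1:ℂ)*b*c*p1*ω^2 + (1:ℂ)*b^2*p3*ω^2 + (-3:ℂ)*b^2*p2 + (3:ℂ)*b^2*p2*ω + (1:ℂ)*b^2*p1*ω + (2:ℂ)*a*c*p3*ω + (3:ℂ)*a*c*p2 + (-1:ℂ)*a*c*p2*ω + (1:ℂ)*a*c*p2*ω^2 + (2:ℂ)*a*c*p1 + (3:ℂ)*a*b*p3 + (-1:ℂ)*a*b*p3*ω + (1:ℂ)*a*b*p3*ω^2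 + (2:ℂ)*a*b*p2*ω + (2:ℂ)*a*b*p1 + (1:ℂ)*a^2*p3 + (1:ℂ)*a^2*p2)*hω
  have hC : (p1+p2+p3)*(p1+ω*p2+ω^2*p3)*(a+ω^2*b+ω*c)
      + (p1+p2+p3)*(p1+ω^2*p2+ω*p3)*(a+ω*b+ω^2*c)
      + (p1+ω*p2+ω^2*p3)*(p1+ω^2*p2+ω*p3)*(a+b+c) = 0 := by
    linear_combination h 1 - (1/3:ℂ)*h (-1) - (1/6:ℂ)*h 2 - (1/2:ℂ)*h 0 +
      ((-3:ℂ)*c*p3^2 + (3:ℂ)*c*p3^2*ω + (2:ℂ)*c*p2*p3*ω^2 + (1:ℂ)*c*p2^2*ω^2 + (2:ℂ)*c*p1*p3*ω + (3:ℂ)*c*p1*p2 + (-1:ℂ)*c*p1*p2*ω + (1:ℂ)*c*p1*p2*ω^2 + (1:ℂ)*c*p1^2 + (1:ℂ)*b*p3^2*ω^2 + (2:ℂ)*b*p2*p3*ω^2 + (-3:ℂ)*b*p2^2 + (3:ℂ)*b*p2^2*ω + (3:ℂ)*b*p1*p3 + (-1:ℂ)*b*p1*p3*ω + (1:ℂ)*b*p1*p3*ω^2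 + (2:ℂ)*b*p1*p2*ω + (1:ℂ)*b*p1^2 + (1:ℂ)*a*p3^2*ω + (3:ℂ)*a*p2*p3 + (-1:ℂ)*a*p2*p3*ω + (1:ℂ)*a*p2*p3*ω^2 + (1:ℂ)*a*p2^2*ω + (2:ℂ)*a*p1*p3 + (2:ℂ)*a*p1*p2)*hω
  have hD : (p1+p2+p3)*(p1+ω*p2+ω^2*p3)*(p1+ω^2*p2+ω*p3) = 1 := by
    linear_combination h 0 +
      ((-1:ℂ)*p3^3 + (1:ℂ)*p3^3*ω + (1:ℂ)*p2*p3^2*ω^2 + (1:ℂ)*p2^2*p3*ω^2 + (-1:ℂ)*p2^3 + (1:ℂ)*p2^3*ω + (1:ℂ)*p1*p3^2*ω + (3:ℂ)*p1*p2*p3 + (-1:ℂ)*p1*p2*p3*ω + (1:ℂ)*p1*p2*p3*ω^2 + (1:ℂ)*p1*p2^2*ω + (1:ℂ)*p1^2*p3 + (1:ℂ)*p1^2*p2)*hω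
  obtain ⟨e0, e1, e2⟩ := aux (p1+p2+p3) (p1+ω*p2+ω^2*p3) (p1+ω^2*p2+ω*p3)
    (a+b+c) (a+ω*b+ω^2*c) (a+ω^2*b+ω*c) hD hA hB hC
  have ha : a = 0 := by
    linear_combination (1/3:ℂ)*e0 + (1/3:ℂ)*e1 + (1/3:ℂ)*e2 -
      (((1:ℂ)*c + (1:ℂ)*b)/3)*hω
  have hb : b = 0 := by
    linear_combination (1/3:ℂ)*e0 + (ω^2/3)*e1 + (ω/3)*e2 -
      (((1:ℂ)*c + (-1:ℂ)*c*ω + (1:ℂ)*c*ω^2 + (-2:ℂ)*b + (2:ℂ)*b*ω + (1:ℂ)*a)/3)*hω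
  have hc : c = 0 := by
    linear_combination (1/3:ℂ)*e0 + (ω/3)*e1 + (ω^2/3)*e2 -
      (((-2:ℂ)*c + (2:ℂ)*c*ω + (1:ℂ)*b + (-1:ℂ)*b*ω + (1:ℂ)*b*ω^2 + (1:ℂ)*a)/3)*hω
  exact hv (by simp [Prod.ext_iff, ha, hb, hc])
end

section
/- Every projective line contained in the projective cubic surface {[w:x:y:z] ∈ ℙ³(ℂ) : x³ + y³ + z³ − 3xyz = w³} lies entirely in the plane at infinity w = 0; consequently the surface contains exactly three lines, namely {w = 0, x + y + z = 0}, {w = 0, x + εy + ε²z = 0}, and {w = 0, x + ε²y + εz = 0}, where ε is a primitive cube root of unity. -/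
open Module

private lemma cubic_factor (e : ℂ) (he : e^2 + e + 1 = 0) (a b c : ℂ) :
    a^3 + b^3 + c^3 - 3*(a*b*c) = (a+b+c)*(a+e*b+e^2*c)*(a+e^2*b+e*c) := by
  linear_combination (-((e-1)*(b^3+c^3) + a^2*b + a^2*c + e*(a*b^2+a*c^2)
    + e^2*(b^2*c+b*c^2) + (e^2-e+3)*(a*b*c))) * he

private lemma prim_rel (ε : ℂ) (hε : IsPrimitiveRoot ε 3) : ε^2 + ε + 1 = 0 := by
  have h1 : ε ^ 3 = 1 := hε.pow_eq_one
  have hne : ε ≠ 1 := hε.ne_one (by norm_num)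
  have h : (ε - 1) * (ε^2 + ε + 1) = 0 := by linear_combination h1
  rcases mul_eq_zero.mp h with h | h
  · exact absurd (sub_eq_zero.mp h) hne
  · exact h

private lemma aux_nz (a b : ℂ) (hab : a = 0 → b ≠ 0) :
    ∃ x : ℂ, ∀ s : ℂ, s ≠ x → a + s * b ≠ 0 := by
  by_cases hb : b = 0
  · exact ⟨0, fun s _ h => (hab (by simpa [hb] using h)) hb⟩
  · refine ⟨-a/b, fun s hs h => hs ?_⟩
    field_simp
    linear_combination h

/-- Any 2-plane contained in the cubic cone lies in w = 0. -/
private lemma key (ε : ℂ) (he : ε^2 + ε + 1 = 0) (L : Submodule ℂ (Fin 4 → ℂ))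
    (h2 : Module.finrank ℂ L = 2)
    (hF : ∀ p ∈ L, (p 1)^3 + (p 2)^3 + (p 3)^3 - 3 * (p 1 * p 2 * p 3) = (p 0)^3) :
    ∀ p ∈ L, p 0 = 0 := by
  by_contra hcon
  push_neg at hcon
  obtain ⟨p, hpL, hp0⟩ := hcon
  set p' : Fin 4 → ℂ := (p 0)⁻¹ • p with hp'def
  have hp'L : p' ∈ L := L.smul_mem _ hpL
  have hp'0 : p' 0 = 1 := by simp [hp'def, inv_mul_cancel₀ hp0]
  have hp'ne : p' ≠ 0 := fun h => by simp [h] at hp'0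
  have hnle : ¬ (L ≤ Submodule.span ℂ {p'}) := by
    intro hle
    have := Submodule.finrank_mono hle
    rw [h2, finrank_span_singleton hp'ne] at this
    omega
  obtain ⟨q, hqL, hq⟩ := SetLike.not_le_iff_exists.mp hnle
  set r : Fin 4 → ℂ := q - (q 0) • p' with hrdef
  have hrL : r ∈ L := L.sub_mem hqL (L.smul_mem _ hp'L)
  have hr0 : r 0 = 0 := by simp [hrdef, hp'0]
  have hrne : r ≠ 0 := by
    intro h
    apply hq
    rw [Submodule.mem_span_singleton]
    exact ⟨q 0, (sub_eq_zero.mp (by simpa [hrdef] using h)).symm⟩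
  have hstep : ∀ α β : ℂ,
      (∀ s : Fin 4 → ℂ, s 1 + α*s 2 + β*s 3 = 0 →
        (s 1)^3 + (s 2)^3 + (s 3)^3 - 3 * (s 1 * s 2 * s 3) = 0) →
      r 1 + α*r 2 + β*r 3 = 0 := by
    intro α β hvan
    by_contra hd
    set t : ℂ := -(p' 1 + α*p' 2 + β*p' 3)/(r 1 + α*r 2 + β*r 3) with htdef
    set s : Fin 4 → ℂ := p' + t • r with hsdef
    have hsL : s ∈ L := L.add_mem hp'L (L.smul_mem t hrL)
    have hs0 : s 0 = 1 := by simp [hsdef, hp'0, hr0]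
    have hsl : s 1 + α*s 2 + β*s 3 = 0 := by
      simp only [hsdef, htdef, Pi.add_apply, Pi.smul_apply, smul_eq_mul]
      field_simp
      ring
    have h1 := hF s hsL
    rw [hvan s hsl, hs0] at h1
    norm_num at h1
  have e1 : r 1 + 1*r 2 + 1*r 3 = 0 := by
    refine hstep 1 1 (fun s hs => ?_)
    rw [cubic_factor ε he]
    have h0 : s 1 + s 2 + s 3 = 0 := by linear_combination hs
    rw [h0, zero_mul, zero_mul]
  have e2 : r 1 + ε*r 2 + ε^2*r 3 = 0 := by
    refine hstep ε (ε^2) (fun s hs => ?_)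
    rw [cubic_factor ε he, hs, mul_zero, zero_mul]
  have e3 : r 1 + ε^2*r 2 + ε*r 3 = 0 := by
    refine hstep (ε^2) ε (fun s hs => ?_)
    rw [cubic_factor ε he, hs, mul_zero]
  have hr1 : r 1 = 0 := by
    linear_combination (e1 + e2 + e3)/3 - ((r 2 + r 3)/3)*he
  have hr2 : r 2 = 0 := by
    linear_combination (e1 + ε^2*e2 + ε*e3)/3
      - ((r 1 + 2*(ε-1)*r 2 + (ε^2-ε+1)*r 3)/3)*he
  have hr3 : r 3 = 0 := by
    linear_combination (e1 + ε*e2 + ε^2*e3)/3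
      - ((r 1 + (ε^2-ε+1)*r 2 + 2*(ε-1)*r 3)/3)*he
  apply hrne
  funext i
  fin_cases i
  · exact hr0
  · exact hr1
  · exact hr2
  · exact hr3

private lemma planeEq (α β : ℂ) (L : Submodule ℂ (Fin 4 → ℂ))
    (h2 : Module.finrank ℂ L = 2)
    (hle : ∀ p ∈ L, p 0 = 0 ∧ p 1 + α * p 2 + β * p 3 = 0) :
    (L : Set (Fin 4 → ℂ)) = {p | p 0 = 0 ∧ p 1 + α * p 2 + β * p 3 = 0} := by
  let f : (Fin 4 → ℂ) →ₗ[ℂ] ℂ × ℂ :=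
    { toFun := fun p => (p 0, p 1 + α * p 2 + β * p 3)
      map_add' := by intro p q; simp [Prod.ext_iff]; ring
      map_smul' := by intro c p; simp [Prod.ext_iff]; ring }
  have hmem : ∀ p, p ∈ LinearMap.ker f ↔ (p 0 = 0 ∧ p 1 + α*p 2 + β*p 3 = 0) := by
    intro p
    simp [f, LinearMap.mem_ker, Prod.ext_iff]
  have hsurj : Function.Surjective f := by
    intro x
    refine ⟨![x.1, x.2, 0, 0], ?_⟩
    simp [f]
  have hker : Module.finrank ℂ (LinearMap.ker f) = 2 := by
    have h := LinearMap.finrank_range_add_finrank_ker f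
    rw [LinearMap.range_eq_top.mpr hsurj] at h
    simp [finrank_top] at h
    omega
  have hLle : L ≤ LinearMap.ker f := fun p hp => (hmem p).mpr (hle p hp)
  have hEq : L = LinearMap.ker f :=
    Submodule.eq_of_le_of_finrank_eq hLle (by rw [h2, hker])
  rw [hEq]
  ext p
  simpa using hmem p

theorem stmt_16 (ε : ℂ) (hε : IsPrimitiveRoot ε 3) :
    (∀ L : Submodule ℂ (Fin 4 → ℂ), Module.finrank ℂ L = 2 →
        (∀ p ∈ L, (p 1)^3 + (p 2)^3 + (p 3)^3 - 3 * (p 1 * p 2 * p 3) = (p 0)^3) →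
        ∀ p ∈ L, p 0 = 0) ∧
    (∀ L : Submodule ℂ (Fin 4 → ℂ), Module.finrank ℂ L = 2 →
        ((∀ p ∈ L, (p 1)^3 + (p 2)^3 + (p 3)^3 - 3 * (p 1 * p 2 * p 3) = (p 0)^3) ↔
          ((L : Set (Fin 4 → ℂ)) = {p | p 0 = 0 ∧ p 1 + p 2 + p 3 = 0} ∨
           (L : Set (Fin 4 → ℂ)) = {p | p 0 = 0 ∧ p 1 + ε * p 2 + ε^2 * p 3 = 0} ∨
           (L : Set (Fin 4 → ℂ)) = {p | p 0 = 0 ∧ p 1 + ε^2 * p 2 + ε * p 3 = 0}))) := by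
  classical
  have he : ε^2 + ε + 1 = 0 := prim_rel ε hε
  refine ⟨fun L h2 hF => key ε he L h2 hF, fun L h2 => ?_⟩
  constructor
  · intro hF
    have h0 : ∀ p ∈ L, p 0 = 0 := key ε he L h2 hF
    have hprod : ∀ p ∈ L,
        (p 1 + p 2 + p 3) * (p 1 + ε*p 2 + ε^2*p 3) * (p 1 + ε^2*p 2 + ε*p 3) = 0 := by
      intro p hp
      have h := hF p hp
      rw [cubic_factor ε he, h0 p hp] at h
      simpa using h
    -- basis of L
    have : FiniteDimensional ℂ L := Module.finite_of_finrank_eq_succ h2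
    let b := Module.finBasisOfFinrankEq ℂ L h2
    set u : Fin 4 → ℂ := ↑(b 0) with hudef
    set v : Fin 4 → ℂ := ↑(b 1) with hvdef
    have huL : u ∈ L := (b 0).2
    have hvL : v ∈ L := (b 1).2
    have hrepr : ∀ p ∈ L, ∃ c d : ℂ, p = c • u + d • v := by
      intro p hp
      refine ⟨b.repr ⟨p, hp⟩ 0, b.repr ⟨p, hp⟩ 1, ?_⟩
      have h := b.sum_repr ⟨p, hp⟩
      rw [Fin.sum_univ_two] at h
      have h' := congrArg (Subtype.val) h
      simp only [Submodule.coe_add, SetLike.val_smul] at h'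
      rw [hudef, hvdef]
      exact h'.symm
    have hex : (u 1+u 2+u 3 = 0 ∧ v 1+v 2+v 3 = 0) ∨
        (u 1+ε*u 2+ε^2*u 3 = 0 ∧ v 1+ε*v 2+ε^2*v 3 = 0) ∨
        (u 1+ε^2*u 2+ε*u 3 = 0 ∧ v 1+ε^2*v 2+ε*v 3 = 0) := by
      by_contra hc
      push_neg at hc
      obtain ⟨hc1, hc2, hc3⟩ := hc
      obtain ⟨x1, hx1⟩ := aux_nz _ _ hc1
      obtain ⟨x2, hx2⟩ := aux_nz _ _ hc2
      obtain ⟨x3, hx3⟩ := aux_nz _ _ hc3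
      obtain ⟨s, hs⟩ := Infinite.exists_notMem_finset ({x1, x2, x3} : Finset ℂ)
      have hs1 : s ≠ x1 := fun h => hs (by simp [h])
      have hs2 : s ≠ x2 := fun h => hs (by simp [h])
      have hs3 : s ≠ x3 := fun h => hs (by simp [h])
      have hmem : u + s • v ∈ L := L.add_mem huL (L.smul_mem s hvL)
      have hp := hprod _ hmem
      simp only [Pi.add_apply, Pi.smul_apply, smul_eq_mul] at hp
      rcases mul_eq_zero.mp hp with h | h
      · rcases mul_eq_zero.mp h with h' | h'
        · exact hx1 s hs1 (by linear_combination h')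
        · exact hx2 s hs2 (by linear_combination h')
      · exact hx3 s hs3 (by linear_combination h)
    rcases hex with ⟨hA, hB⟩ | ⟨hA, hB⟩ | ⟨hA, hB⟩
    · left
      have hP := planeEq 1 1 L h2 (by
        intro p hp
        obtain ⟨c, d, hpcd⟩ := hrepr p hp
        refine ⟨h0 p hp, ?_⟩
        have e1 : p 1 = c * u 1 + d * v 1 := by rw [hpcd]; simp
        have e2 : p 2 = c * u 2 + d * v 2 := by rw [hpcd]; simp
        have e3 : p 3 = c * u 3 + d * v 3 := by rw [hpcd]; simp
        rw [e1, e2, e3]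
        linear_combination c*hA + d*hB)
      rw [hP]
      ext p
      simp
    · right; left
      exact planeEq ε (ε^2) L h2 (by
        intro p hp
        obtain ⟨c, d, hpcd⟩ := hrepr p hp
        refine ⟨h0 p hp, ?_⟩
        have e1 : p 1 = c * u 1 + d * v 1 := by rw [hpcd]; simp
        have e2 : p 2 = c * u 2 + d * v 2 := by rw [hpcd]; simp
        have e3 : p 3 = c * u 3 + d * v 3 := by rw [hpcd]; simp
        rw [e1, e2, e3]
        linear_combination c*hA + d*hB)
    · right; right
      exact planeEq (ε^2) ε L h2 (by
        intro p hp
        obtain ⟨c, d, hpcd⟩ := hrepr p hp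
        refine ⟨h0 p hp, ?_⟩
        have e1 : p 1 = c * u 1 + d * v 1 := by rw [hpcd]; simp
        have e2 : p 2 = c * u 2 + d * v 2 := by rw [hpcd]; simp
        have e3 : p 3 = c * u 3 + d * v 3 := by rw [hpcd]; simp
        rw [e1, e2, e3]
        linear_combination c*hA + d*hB)
  · intro hset p hp
    rcases hset with hset | hset | hset
    · have hmem : p ∈ {p : Fin 4 → ℂ | p 0 = 0 ∧ p 1 + p 2 + p 3 = 0} := by
        rw [← hset]; exact hp
      obtain ⟨h0, hl⟩ := hmem
      rw [cubic_factor ε he, h0, hl, zero_mul, zero_mul]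
      norm_num
    · have hmem : p ∈ {p : Fin 4 → ℂ | p 0 = 0 ∧ p 1 + ε * p 2 + ε^2 * p 3 = 0} := by
        rw [← hset]; exact hp
      obtain ⟨h0, hl⟩ := hmem
      rw [cubic_factor ε he, h0, hl, mul_zero, zero_mul]
      norm_num
    · have hmem : p ∈ {p : Fin 4 → ℂ | p 0 = 0 ∧ p 1 + ε^2 * p 2 + ε * p 3 = 0} := by
        rw [← hset]; exact hp
      obtain ⟨h0, hl⟩ := hmem
      rw [cubic_factor ε he, h0, hl, mul_zero]
      norm_num
end

section
/- For all rational numbers u ≠ 0 and r, the rational numbers x = u²/3 + (1/(3u))·(r² − 3)/(r² + 3) + (1/u)·2r/(r² + 3), y = u²/3 + (1/(3u))·(r² − 3)/(r² + 3) − (1/u)·2r/(r² + 3), z = u²/3 − (2/(3u))·(r² − 3)/(r² + 3) satisfy x³ + y³ + z³ − 3xyz = 1. -/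
theorem stmt_17 (u r : ℚ) (hu : u ≠ 0)
    (x y z : ℚ)
    (hx : x = u^2/3 + (1/(3*u)) * ((r^2 - 3)/(r^2 + 3)) + (1/u) * (2*r/(r^2 + 3)))
    (hy : y = u^2/3 + (1/(3*u)) * ((r^2 - 3)/(r^2 + 3)) - (1/u) * (2*r/(r^2 + 3)))
    (hz : z = u^2/3 - (2/(3*u)) * ((r^2 - 3)/(r^2 + 3))) :
    x^3 + y^3 + z^3 - 3*x*y*z = 1 := by
  have hr : r^2 + 3 ≠ 0 := by positivity
  subst hx hy hz
  field_simp
  ring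
end

section
/- The set of rational points on the cubic surface x³ + y³ + z³ − 3xyz = 1, i.e., the set of triples (x,y,z) ∈ ℚ³ satisfying the equation, is infinite. -/
theorem stmt_18 :
    {p : ℚ × ℚ × ℚ | p.1^3 + p.2.1^3 + p.2.2^3 - 3 * p.1 * p.2.1 * p.2.2 = 1}.Infinite := by
  apply Set.infinite_of_injective_forall_mem
    (f := fun n : ℕ => ((1 / ((n : ℚ) + 1)^2 - ((n : ℚ) + 1)) / 3 + ((n : ℚ) + 1),
      (1 / ((n : ℚ) + 1)^2 - ((n : ℚ) + 1)) / 3,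
      (1 / ((n : ℚ) + 1)^2 - ((n : ℚ) + 1)) / 3))
  case hi =>
    intro a b hab
    have h2 := congrArg Prod.fst hab
    have h3 := congrArg (Prod.fst ∘ Prod.snd) hab
    simp only [Function.comp] at h2 h3
    have : (a : ℚ) = b := by linarith
    exact_mod_cast this
  case hf =>
    intro n
    have hn : ((n : ℚ) + 1) ≠ 0 := by positivity
    simp only [Set.mem_setOf_eq]
    field_simp
    ring
end

section
/- The rational point (x, y, z) = (18/7, 16/7, 15/7) satisfies x³ + y³ + z³ − 3xyz = 1, but there are no rational numbers u ≠ 0 and r such that 18/7 = u²/3 + (1/(3u))·(r² − 3)/(r² + 3) + (1/u)·2r/(r² + 3), 16/7 = u²/3 + (1/(3u))·(r² − 3)/(r² + 3) − (1/u)·2r/(r² + 3), and 15/7 = u²/3 − (2/(3u))·(r² − 3)/(r² + 3). Hence the rational parametrization does not produce all rational points on the surface. -/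
theorem stmt_19 :
    ((18/7 : ℚ)^3 + (16/7 : ℚ)^3 + (15/7 : ℚ)^3
        - 3 * (18/7 : ℚ) * (16/7 : ℚ) * (15/7 : ℚ) = 1) ∧
    ¬ ∃ u r : ℚ, u ≠ 0 ∧
        (18/7 : ℚ) = u^2/3 + (1/(3*u)) * ((r^2 - 3)/(r^2 + 3)) + (1/u) * (2*r/(r^2 + 3)) ∧
        (16/7 : ℚ) = u^2/3 + (1/(3*u)) * ((r^2 - 3)/(r^2 + 3)) - (1/u) * (2*r/(r^2 + 3)) ∧
        (15/7 : ℚ) = u^2/3 - (2/(3*u)) * ((r^2 - 3)/(r^2 + 3)) := by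
  constructor
  · norm_num
  · rintro ⟨u, r, hu, h1, h2, h3⟩
    have hr : (r^2 + 3 : ℚ) ≠ 0 := by positivity
    have hu2 : u^2 = 7 := by
      have h := congrArg₂ (· + ·) (congrArg₂ (· + ·) h1 h2) h3
      field_simp at h
      have key : (7 - u^2) * (567 * u^3 * (r^2+3)^3) = 0 := by linear_combination (27 * u^2 * (r^2+3)^2) * h
      have : (7 - u^2) = 0 := by
        rcases mul_eq_zero.mp key with h' | h'
        · exact h'
        · exfalso
          have : (567 : ℚ) * u^3 * (r^2+3)^3 ≠ 0 := by positivity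
          exact this h'
      linarith
    have h7 : Irrational (Real.sqrt 7) := by
      have : Nat.Prime 7 := by norm_num
      simpa using this.irrational_sqrt
    apply h7
    refine ⟨|u|, ?_⟩
    have : ((u : ℝ))^2 = 7 := by
      have := congrArg (fun q : ℚ => (q : ℝ)) hu2
      push_cast at this
      simpa using this
    rw [show (7 : ℝ) = ((u:ℝ))^2 from this.symm, Real.sqrt_sq_eq_abs]
    push_cast
    simp
end
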